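/- Let d ≥ 1 and α ∈ [0,1]. Let ρ be a d×d complex density matrix (positive semidefinite with trace 1), and let O be a d×d Hermitian matrix with spectral decomposition O = Σ_{i=1}^d λ_i·P_i into real eigenvalues λ_i and rank-one orthogonal projections P_i with Σ_i P_i = I. Define the depolarized state ρ' := (1−α)·ρ + (α/d)·I, outcome probabilities p_i := Tr(ρ'·P_i), mean m := Σ_i λ_i·p_i, and single-shot variance η² := Σ_i λ_i²·p_i − m². Then p_i = (1−α)·Tr(ρ·P_i) + α/d for each i, and η² ≥ α·σ_uniform², where σ_uniform² := (1/d)·Σ_i λ_i² − ((1/d)·Σ_i λ_i)². -/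

import Mathlib

open Matrix
open scoped ComplexOrder

lemma aux_trace_nonneg {n : ℕ} {A : Matrix (Fin n) (Fin n) ℂ}
    (hA : A.PosSemidef) : 0 ≤ A.trace := by
  rw [Matrix.trace]
  refine Finset.sum_nonneg fun i _ => ?_
  exact hA.diag_nonneg

open scoped MatrixOrder in
lemma aux_trace_mul_nonneg {n : ℕ} {A B : Matrix (Fin n) (Fin n) ℂ}
    (hA : A.PosSemidef) (hB : B.PosSemidef) : 0 ≤ (A * B).trace := by
  have h1 : A * B = A * CFC.sqrt B * CFC.sqrt B := by rw [mul_assoc, CFC.sqrt_mul_sqrt_self B hB.nonneg]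
  rw [h1, Matrix.trace_mul_cycle]
  have h2 := hA.mul_mul_conjTranspose_same (CFC.sqrt B)
  rw [(CFC.sqrt_nonneg B).posSemidef.1.eq] at h2
  exact aux_trace_nonneg h2

lemma aux_trace_proj {n : ℕ} {P : Matrix (Fin n) (Fin n) ℂ}
    (hH : P.IsHermitian) (hI : P * P = P) (hr : P.rank = 1) : P.trace = 1 := by
  have h1 : (hH.eigenvectorUnitary : Matrix (Fin n) (Fin n) ℂ) *
      (star hH.eigenvectorUnitary : Matrix (Fin n) (Fin n) ℂ) = 1 :=
    (Matrix.mem_unitaryGroup_iff).mp hH.eigenvectorUnitary.2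
  have h1' : (star hH.eigenvectorUnitary : Matrix (Fin n) (Fin n) ℂ) *
      (hH.eigenvectorUnitary : Matrix (Fin n) (Fin n) ℂ) = 1 :=
    (Matrix.mem_unitaryGroup_iff').mp hH.eigenvectorUnitary.2
  set U : Matrix (Fin n) (Fin n) ℂ := (hH.eigenvectorUnitary : Matrix (Fin n) (Fin n) ℂ) with hU
  have hdiag := hH.conjStarAlgAut_star_eigenvectorUnitary
  rw [Unitary.conjStarAlgAut_star_apply] at hdiag
  have key : diagonal (RCLike.ofReal ∘ hH.eigenvalues : Fin n → ℂ) *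
        diagonal (RCLike.ofReal ∘ hH.eigenvalues : Fin n → ℂ)
      = diagonal (RCLike.ofReal ∘ hH.eigenvalues : Fin n → ℂ) := by
    rw [← hdiag]
    calc (star U * P * U) * (star U * P * U)
        = star U * (P * (U * star U) * P) * U := by simp only [Matrix.mul_assoc]
      _ = star U * (P * P) * U := by rw [h1, mul_one]
      _ = star U * P * U := by rw [hI]
  rw [Matrix.diagonal_mul_diagonal] at key
  have hfun := Matrix.diagonal_injective key
  have hev01 : ∀ i, hH.eigenvalues i = 0 ∨ hH.eigenvalues i = 1 := by
    intro i
    have h := congrFun hfun i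
    simp only [Pi.mul_apply, Function.comp_apply] at h
    have h' : hH.eigenvalues i * hH.eigenvalues i = hH.eigenvalues i := by exact_mod_cast h
    have h0 : hH.eigenvalues i * (hH.eigenvalues i - 1) = 0 := by linear_combination h'
    rcases mul_eq_zero.mp h0 with h | h
    · exact Or.inl h
    · exact Or.inr (by linarith)
  have hcard : Fintype.card {i // hH.eigenvalues i ≠ 0} = 1 := by
    rw [← hH.rank_eq_card_non_zero_eigs]; exact hr
  obtain ⟨⟨i₀, hi₀⟩, huniq⟩ := Fintype.card_eq_one_iff.mp hcard
  have hev_sum : ∑ i, hH.eigenvalues i = 1 := by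
    rw [Finset.sum_eq_single i₀]
    · rcases hev01 i₀ with h | h
      · exact absurd h hi₀
      · exact h
    · intro j _ hj
      rcases hev01 j with h | h
      · exact h
      · have hj0 : hH.eigenvalues j ≠ 0 := by rw [h]; norm_num
        exact absurd (congrArg Subtype.val (huniq ⟨j, hj0⟩)) hj
    · intro h; exact absurd (Finset.mem_univ i₀) h
  have htr : P.trace = ∑ i, (hH.eigenvalues i : ℂ) := by
    conv_lhs => rw [hH.spectral_theorem]
    rw [Unitary.conjStarAlgAut_apply, Matrix.trace_mul_cycle, h1', one_mul, Matrix.trace_diagonal]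
    rfl
  rw [htr]
  exact_mod_cast hev_sum

/-- single-shot variance lower bound under depolarizing noise.
Let `ρ` be a `d × d` density matrix, `O = ∑ i, lam i • P i` a Hermitian matrix with real
eigenvalues `lam i` and rank-one orthogonal projections `P i` summing to the identity.
For the depolarized state `ρ' = (1-α)·ρ + (α/d)·I`, the outcome probabilities satisfy
`Tr(ρ'·P i) = (1-α)·Tr(ρ·P i) + α/d`, and the single-shot variance
`η² = ∑ i, lam i²·p i - (∑ i, lam i·p i)²` is at least `α·σ_uniform²`, where
`σ_uniform² = (1/d)·∑ i, lam i² - ((1/d)·∑ i, lam i)²`. -/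
theorem depolarized_single_shot_variance_lower_bound
    (d : ℕ) (hd : 1 ≤ d) (α : ℝ) (hα : α ∈ Set.Icc (0 : ℝ) 1)
    (ρ : Matrix (Fin d) (Fin d) ℂ) (hρ : ρ.PosSemidef) (hρtr : ρ.trace = 1)
    (lam : Fin d → ℝ) (P : Fin d → Matrix (Fin d) (Fin d) ℂ)
    (hPherm : ∀ i, (P i).IsHermitian)
    (hPidem : ∀ i, P i * P i = P i)
    (hPrank : ∀ i, (P i).rank = 1)
    (hPsum : ∑ i, P i = 1)
    (O : Matrix (Fin d) (Fin d) ℂ)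
    (hO : O = ∑ i, (lam i : ℂ) • P i)
    (ρ' : Matrix (Fin d) (Fin d) ℂ)
    (hρ' : ρ' = ((1 - α : ℝ) : ℂ) • ρ + ((α / d : ℝ) : ℂ) • 1)
    (p : Fin d → ℝ) (hp : ∀ i, p i = ((ρ' * P i).trace).re)
    (m : ℝ) (hm : m = ∑ i, lam i * p i)
    (η2 : ℝ) (hη2 : η2 = ∑ i, lam i ^ 2 * p i - m ^ 2) :
    (∀ i, (ρ' * P i).trace = ((1 - α : ℝ) : ℂ) * (ρ * P i).trace + ((α / d : ℝ) : ℂ)) ∧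
      α * ((1 / d) * ∑ i, lam i ^ 2 - ((1 / d) * ∑ i, lam i) ^ 2) ≤ η2 := by
  obtain ⟨hα0, hα1⟩ := hα
  have hDpos : (0 : ℝ) < (d : ℝ) := by
    have : (1 : ℝ) ≤ (d : ℝ) := by exact_mod_cast hd
    linarith
  have hPpsd : ∀ i, (P i).PosSemidef := by
    intro i
    have h : P i = (P i)ᴴ * (P i) := by rw [(hPherm i).eq, hPidem i]
    exact h ▸ Matrix.posSemidef_conjTranspose_mul_self (P i)
  have hq0 : ∀ i, 0 ≤ ((ρ * P i).trace) := fun i => aux_trace_mul_nonneg hρ (hPpsd i)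
  set q : Fin d → ℝ := fun i => ((ρ * P i).trace).re with hq
  have hq_nonneg : ∀ i, 0 ≤ q i := fun i => (Complex.le_def.mp (hq0 i)).1
  have hqc : ∀ i, (ρ * P i).trace = (q i : ℂ) := by
    intro i
    have h := Complex.le_def.mp (hq0 i)
    apply Complex.ext
    · simp [hq]
    · simpa using h.2.symm
  have htrP : ∀ i, (P i).trace = 1 := fun i => aux_trace_proj (hPherm i) (hPidem i) (hPrank i)
  have hc1 : ∀ i, (ρ' * P i).trace = ((1 - α : ℝ) : ℂ) * (ρ * P i).trace + ((α / d : ℝ) : ℂ) := by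
    intro i
    rw [hρ', add_mul, smul_mul_assoc, smul_mul_assoc, one_mul, trace_add, trace_smul, trace_smul,
      htrP i, smul_eq_mul, smul_eq_mul, mul_one]
  refine ⟨hc1, ?_⟩
  have hpi : ∀ i, p i = (1 - α) * q i + α / d := by
    intro i
    rw [hp i, hc1 i, hqc i, ← Complex.ofReal_mul, ← Complex.ofReal_add, Complex.ofReal_re]
  have hqsum : ∑ i, q i = 1 := by
    have htr : ∑ i, (ρ * P i).trace = 1 := by
      calc ∑ i, (ρ * P i).trace = (ρ * ∑ i, P i).trace := by rw [Finset.mul_sum, trace_sum]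
        _ = 1 := by rw [hPsum, mul_one, hρtr]
    have := congrArg Complex.re htr
    simpa [hq, Complex.re_sum] using this
  set S1 := ∑ i, lam i with hS1
  set S2 := ∑ i, lam i ^ 2 with hS2
  set Eq1 := ∑ i, lam i * q i with hEq1
  set E2q := ∑ i, lam i ^ 2 * q i with hE2q
  have hm' : m = (1 - α) * Eq1 + α / d * S1 := by
    rw [hm]
    simp only [hpi]
    rw [show (∑ i, lam i * ((1 - α) * q i + α / d))
        = (1 - α) * (∑ i, lam i * q i) + α / d * ∑ i, lam i by
      rw [Finset.mul_sum, Finset.mul_sum, ← Finset.sum_add_distrib]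
      exact Finset.sum_congr rfl fun i _ => by ring]
  have hE2 : ∑ i, lam i ^ 2 * p i = (1 - α) * E2q + α / d * S2 := by
    simp only [hpi]
    rw [show (∑ i, lam i ^ 2 * ((1 - α) * q i + α / d))
        = (1 - α) * (∑ i, lam i ^ 2 * q i) + α / d * ∑ i, lam i ^ 2 by
      rw [Finset.mul_sum, Finset.mul_sum, ← Finset.sum_add_distrib]
      exact Finset.sum_congr rfl fun i _ => by ring]
  have hvar : 0 ≤ E2q - Eq1 ^ 2 := by
    have hkey : E2q - Eq1 ^ 2 = ∑ i, q i * (lam i - Eq1) ^ 2 := by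
      have expand : ∀ i ∈ Finset.univ, q i * (lam i - Eq1) ^ 2
          = lam i ^ 2 * q i - 2 * Eq1 * (lam i * q i) + Eq1 ^ 2 * q i := fun i _ => by ring
      rw [Finset.sum_congr rfl expand, Finset.sum_add_distrib, Finset.sum_sub_distrib,
        ← Finset.mul_sum, ← Finset.mul_sum, hqsum, ← hEq1, ← hE2q]
      ring
    rw [hkey]
    exact Finset.sum_nonneg fun i _ => mul_nonneg (hq_nonneg i) (sq_nonneg _)
  rw [hη2, hm', hE2]
  set u1 := S1 / (d : ℝ) with hu1
  set u2 := S2 / (d : ℝ) with hu2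
  have e1 : (1 / (d : ℝ)) * S1 = u1 := by rw [hu1]; ring
  have e2 : (1 / (d : ℝ)) * S2 = u2 := by rw [hu2]; ring
  have e3 : α / (d : ℝ) * S1 = α * u1 := by rw [hu1]; ring
  have e4 : α / (d : ℝ) * S2 = α * u2 := by rw [hu2]; ring
  rw [e1, e2, e3, e4]
  nlinarith [mul_nonneg (sub_nonneg.mpr hα1) hvar,
    mul_nonneg (mul_nonneg hα0 (sub_nonneg.mpr hα1)) (sq_nonneg (Eq1 - u1))]
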